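/- arXiv:0910.3093 — 8 statements merged into one kernel-verified Lean document; each statement's English description precedes it below -/
import Mathlib

section
/- Let Γ = (Γ₀, Γ₁, ν, τ) be a connected valued stable translation quiver and let f : Γ₀ → ℕ₀ be a subadditive function with f ∘ τ = f. Then either f is identically zero, or f(x) > 0 for every vertex x ∈ Γ₀. -/
/-- A valued stable translation quiver `(Γ₀, Γ₁, ν, τ)`: the vertex set is `V`, the
arrow set `Γ₁ ⊆ Γ₀ × Γ₀` is given by the relation `Arrow`, `ν` is a valuation with
`Γ₁ = ν⁻¹(ℕ₊ × ℕ₊)`, the quiver has no loops and is locally finite, and `τ` is a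
translation satisfying `ν(τ(b),a) = Δ(ν(a,b))` for all arrows `(a,b)`. -/
structure ValuedStableTranslationQuiver (V : Type*) where
  /-- the arrow relation -/
  Arrow : V → V → Prop
  /-- the valuation -/
  nu : V → V → ℕ × ℕ
  /-- the translation -/
  tau : V ≃ V
  arrow_iff : ∀ x y, Arrow x y ↔ (0 < (nu x y).1 ∧ 0 < (nu x y).2)
  no_loops : ∀ x, ¬ Arrow x x
  locally_finite : ∀ x, {y | Arrow x y ∨ Arrow y x}.Finite
  tau_arrow : ∀ x y, Arrow (tau x) (tau y) ↔ Arrow x y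
  translation : ∀ a y, Arrow y a ↔ Arrow (tau a) y
  valued : ∀ a b, Arrow a b → nu (tau b) a = ((nu a b).2, (nu a b).1)

namespace ValuedStableTranslationQuiver

variable {V : Type*} (Q : ValuedStableTranslationQuiver V)

/-- the set of predecessors of a vertex is finite -/
theorem predsFinite (y : V) : {x | Q.Arrow x y}.Finite :=
  (Q.locally_finite y).subset fun _ hx => Or.inr hx

/-- the finset of predecessors `y⁻` of a vertex `y` -/
noncomputable def preds (y : V) : Finset V := (Q.predsFinite y).toFinset

/-- a function `f : Γ₀ → ℕ₀` is subadditive if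
`f(y) + f(τ(y)) ≥ ∑_{x ∈ y⁻} f(x)·pr₁(ν(x,y))` for all vertices `y` -/
def Subadditive (f : V → ℕ) : Prop :=
  ∀ y, ∑ x ∈ Q.preds y, f x * (Q.nu x y).1 ≤ f y + f (Q.tau y)

/-- a function `f : Γ₀ → ℕ₀` is additive if
`f(y) + f(τ(y)) = ∑_{x ∈ y⁻} f(x)·pr₁(ν(x,y))` for all vertices `y` -/
def Additive (f : V → ℕ) : Prop :=
  ∀ y, f y + f (Q.tau y) = ∑ x ∈ Q.preds y, f x * (Q.nu x y).1

/-- connectedness of the underlying undirected graph -/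
def Connected : Prop :=
  ∀ x y : V, Relation.ReflTransGen (fun a b => Q.Arrow a b ∨ Q.Arrow b a) x y

end ValuedStableTranslationQuiver

/-- Proposition 1.1(1): If `f` is a subadditive function on a connected valued stable
translation quiver with `f ∘ τ = f`, then either `f = 0` or `f(x) > 0` for all `x`. -/
theorem statement0 {V : Type*} (Q : ValuedStableTranslationQuiver V)
    (hconn : Q.Connected) (f : V → ℕ)
    (hsub : Q.Subadditive f) (htau : ∀ x, f (Q.tau x) = f x) :
    (∀ x, f x = 0) ∨ (∀ x, 0 < f x) := by
  by_cases h : ∃ x, f x = 0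
  · obtain ⟨x₀, hx₀⟩ := h
    left
    -- key: zeros propagate to predecessors
    have key : ∀ a b, f a = 0 → Q.Arrow b a → f b = 0 := by
      intro a b ha hab
      have hmem : b ∈ Q.preds a := by
        simp [ValuedStableTranslationQuiver.preds, Set.Finite.mem_toFinset, hab]
      have hle := hsub a
      rw [ha, htau, ha] at hle
      have := Finset.single_le_sum (f := fun x => f x * (Q.nu x a).1)
        (fun i _ => Nat.zero_le _) hmem
      have hz : f b * (Q.nu b a).1 = 0 := Nat.le_zero.mp (this.trans hle)
      have hpos : 0 < (Q.nu b a).1 := ((Q.arrow_iff b a).mp hab).1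
      exact (Nat.mul_eq_zero.mp hz).resolve_right hpos.ne'
    have step : ∀ a b, f a = 0 → (Q.Arrow a b ∨ Q.Arrow b a) → f b = 0 := by
      intro a b ha hab
      rcases hab with hab | hba
      · have : Q.Arrow (Q.tau b) a := (Q.translation b a).mp hab
        have := key a (Q.tau b) ha this
        rwa [htau] at this
      · exact key a b ha hba
    intro y
    have := hconn x₀ y
    induction this with
    | refl => exact hx₀
    | tail _ hbc ih => exact step _ _ ih hbc
  · right
    intro x
    exact Nat.pos_of_ne_zero fun hx => h ⟨x, hx⟩
end

section
/- Let Γ = (Γ₀, Γ₁, ν, τ) be a valued stable translation quiver such that ⟨τ⟩ is an admissible subgroup of the automorphism group of Γ. Then the prescription d([x],[y]) := pr₁(ν(a,b)) whenever there exist a ∈ [x] and b ∈ [y] with (a,b) ∈ Γ₁, and d([x],[y]) := 0 if no such pair exists, is well defined (independent of the chosen representatives), and (Γ₀/⟨τ⟩, d) is a valued graph: d([x],[x]) = 0 for every orbit [x], d([x],[y]) ≠ 0 if and only if d([y],[x]) ≠ 0, and for each orbit [x] only finitely many orbits [y] satisfy d([x],[y]) ≠ 0. -/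
namespace ValuedStableTranslationQuiver

variable {V : Type*} (Q : ValuedStableTranslationQuiver V)

/-- the `⟨τ⟩`-orbit equivalence relation on the vertices -/
def tauSetoid : Setoid V where
  r a b := ∃ k : ℤ, (Q.tau ^ k) a = b
  iseqv := by
    constructor
    · exact fun a => ⟨0, by simp⟩
    · rintro a b ⟨k, rfl⟩
      exact ⟨-k, by rw [← Equiv.Perm.mul_apply, ← zpow_add]; simp⟩
    · rintro a b c ⟨k, rfl⟩ ⟨l, rfl⟩
      exact ⟨l + k, by rw [zpow_add, Equiv.Perm.mul_apply]⟩

/-- `⟨τ⟩` is an admissible subgroup of `Aut(Γ)`. -/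
def TauAdmissible : Prop :=
  ∀ x y : V,
    (Set.range (fun k : ℤ => (Q.tau ^ k) x) ∩ ({y} ∪ {z | Q.Arrow y z})).Subsingleton ∧
    (Set.range (fun k : ℤ => (Q.tau ^ k) x) ∩ ({y} ∪ {z | Q.Arrow z y})).Subsingleton

end ValuedStableTranslationQuiver

namespace ValuedStableTranslationQuiver

variable {V : Type*} (Q : ValuedStableTranslationQuiver V)

theorem arrow_tau_inv (a b : V) :
    Q.Arrow (Q.tau⁻¹ a) (Q.tau⁻¹ b) ↔ Q.Arrow a b := by
  rw [← Q.tau_arrow (Q.tau⁻¹ a) (Q.tau⁻¹ b)]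
  simp

theorem arrow_zpow (k : ℤ) (a b : V) :
    Q.Arrow ((Q.tau ^ k) a) ((Q.tau ^ k) b) ↔ Q.Arrow a b := by
  induction k using Int.induction_on generalizing a b with
  | zero => simp
  | succ n ih =>
      rw [show ((n : ℤ) + 1) = 1 + n by ring, zpow_add, Equiv.Perm.mul_apply,
        Equiv.Perm.mul_apply, zpow_one, Q.tau_arrow, ih]
  | pred n ih =>
      rw [show (-(n : ℤ) - 1) = -n + -1 by ring, zpow_add, Equiv.Perm.mul_apply,
        Equiv.Perm.mul_apply, zpow_neg_one, ih, Q.arrow_tau_inv]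

theorem nu_tau (a b : V) (hab : Q.Arrow a b) :
    Q.nu (Q.tau a) (Q.tau b) = Q.nu a b := by
  have h1 : Q.Arrow (Q.tau b) a := (Q.translation b a).mp hab
  have h2 := Q.valued (Q.tau b) a h1
  rw [Q.valued a b hab] at h2
  simpa using h2

theorem nu_tau_inv (a b : V) (hab : Q.Arrow a b) :
    Q.nu (Q.tau⁻¹ a) (Q.tau⁻¹ b) = Q.nu a b := by
  have h : Q.Arrow (Q.tau⁻¹ a) (Q.tau⁻¹ b) := (Q.arrow_tau_inv a b).mpr hab
  have := Q.nu_tau _ _ h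
  simpa using this.symm

theorem nu_zpow (k : ℤ) (a b : V) (hab : Q.Arrow a b) :
    Q.nu ((Q.tau ^ k) a) ((Q.tau ^ k) b) = Q.nu a b := by
  induction k using Int.induction_on with
  | zero => simp
  | succ n ih =>
      rw [show ((n : ℤ) + 1) = 1 + n by ring, zpow_add, Equiv.Perm.mul_apply,
        Equiv.Perm.mul_apply, zpow_one,
        Q.nu_tau _ _ ((Q.arrow_zpow n a b).mpr hab), ih]
  | pred n ih =>
      rw [show (-(n : ℤ) - 1) = -1 + -n by ring, zpow_add, Equiv.Perm.mul_apply,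
        Equiv.Perm.mul_apply, zpow_neg_one,
        Q.nu_tau_inv _ _ ((Q.arrow_zpow (-n) a b).mpr hab), ih]

end ValuedStableTranslationQuiver

open ValuedStableTranslationQuiver in
/-- Lemma 1.3(1): if `⟨τ⟩` is admissible, then `d([x],[y]) := pr₁(ν(a,b))` whenever there
are `a ∈ [x]`, `b ∈ [y]` with an arrow `a → b` (and `d([x],[y]) := 0` otherwise) is well
defined and turns the set of `⟨τ⟩`-orbits `Γ₀/⟨τ⟩` into a valued graph. -/
theorem statement3 {V : Type*} (Q : ValuedStableTranslationQuiver V)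
    (hadm : Q.TauAdmissible) :
    -- `d` is well defined (independent of the chosen representatives)
    (∀ a b a' b' : V, (∃ k : ℤ, (Q.tau ^ k) a = a') → (∃ k : ℤ, (Q.tau ^ k) b = b') →
      Q.Arrow a b → Q.Arrow a' b' → (Q.nu a b).1 = (Q.nu a' b').1) ∧
    -- `d([x],[x]) = 0` : no arrows within a single orbit
    (∀ a b : V, (∃ k : ℤ, (Q.tau ^ k) a = b) → ¬ Q.Arrow a b) ∧
    -- `d([x],[y]) ≠ 0 ↔ d([y],[x]) ≠ 0`
    (∀ x y : V,
      (∃ a b : V, (∃ k : ℤ, (Q.tau ^ k) x = a) ∧ (∃ k : ℤ, (Q.tau ^ k) y = b) ∧ Q.Arrow a b) ↔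
      (∃ a b : V, (∃ k : ℤ, (Q.tau ^ k) y = a) ∧ (∃ k : ℤ, (Q.tau ^ k) x = b) ∧ Q.Arrow a b)) ∧
    -- for each orbit `[x]`, only finitely many orbits `[y]` satisfy `d([x],[y]) ≠ 0`
    (∀ x : V, {c : Quotient (tauSetoid Q) |
      ∃ a b : V, (∃ k : ℤ, (Q.tau ^ k) x = a) ∧ Quotient.mk (tauSetoid Q) b = c ∧
        Q.Arrow a b}.Finite) := by
  refine ⟨?_, ?_, ?_, ?_⟩
  · rintro a b a' b' ⟨k, rfl⟩ ⟨l, rfl⟩ hab hab'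
    -- show (τ^k) b = (τ^l) b via admissibility
    have key : (Q.tau ^ k) b = (Q.tau ^ l) b := by
      have hsub := (hadm b ((Q.tau ^ k) a)).1
      refine hsub ⟨⟨k, rfl⟩, Or.inr ?_⟩ ⟨⟨l, rfl⟩, Or.inr ?_⟩
      · exact (Q.arrow_zpow k a b).mpr hab
      · exact hab'
    rw [← key, Q.nu_zpow k a b hab]
  · rintro a b ⟨k, rfl⟩ hab
    have hsub := (hadm a a).1
    have hb : (Q.tau ^ k) a = a :=
      (hsub ⟨⟨0, by simp⟩, Or.inl rfl⟩ ⟨⟨k, rfl⟩, Or.inr hab⟩).symm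
    rw [hb] at hab
    exact Q.no_loops a hab
  · have main : ∀ x y : V,
        (∃ a b : V, (∃ k : ℤ, (Q.tau ^ k) x = a) ∧ (∃ k : ℤ, (Q.tau ^ k) y = b) ∧ Q.Arrow a b) →
        (∃ a b : V, (∃ k : ℤ, (Q.tau ^ k) y = a) ∧ (∃ k : ℤ, (Q.tau ^ k) x = b) ∧ Q.Arrow a b) := by
      rintro x y ⟨a, b, ⟨k, rfl⟩, ⟨l, rfl⟩, hab⟩
      refine ⟨Q.tau ((Q.tau ^ l) y), (Q.tau ^ k) x, ⟨l + 1, ?_⟩, ⟨k, rfl⟩, ?_⟩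
      · rw [show l + 1 = (1 : ℤ) + l by ring, zpow_add, Equiv.Perm.mul_apply, zpow_one]
      · exact (Q.translation _ _).mp hab
    exact fun x y => ⟨main x y, main y x⟩
  · intro x
    have hfin : {y | Q.Arrow x y}.Finite :=
      (Q.locally_finite x).subset fun _ h => Or.inl h
    refine (hfin.image (Quotient.mk (tauSetoid Q))).subset ?_
    rintro c ⟨a, b, ⟨k, rfl⟩, rfl, hab⟩
    refine ⟨(Q.tau ^ (-k)) b, ?_, ?_⟩
    · have := (Q.arrow_zpow (-k) ((Q.tau ^ k) x) b).mpr hab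
      rwa [← Equiv.Perm.mul_apply, ← zpow_add, neg_add_cancel, zpow_zero,
        Equiv.Perm.one_apply] at this
    · exact Quotient.sound ⟨k, by
        rw [← Equiv.Perm.mul_apply, ← zpow_add, add_neg_cancel, zpow_zero,
          Equiv.Perm.one_apply]⟩
end

section
/- Let f : ℤ × ℕ₊ → ℕ₀ be a function on the vertices of ℤ[A_∞] with f ∘ τ = f (so that f depends only on the quasi-length; write φ(i) for the common value of f on vertices of quasi-length i, with the convention φ(0) := 0). Suppose there is ℓ ≥ 1 such that f(y) + f(τ(y)) = Σ_{x ∈ y⁻} f(x) for every vertex y of quasi-length ≥ ℓ. Then for every i ≥ ℓ one has the identity of integers φ(i) = (φ(ℓ) − φ(ℓ−1))·(i − ℓ) + φ(ℓ). Moreover, if f is bounded, then φ(i) = φ(i') for all i, i' ≥ max(ℓ−1, 1). -/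
/- We work in the stable translation quiver `ℤ[A_∞]`, whose vertices are the pairs
`(n, i) ∈ ℤ × ℕ` with `i ≥ 1` (the quasi-length of `(n,i)` being `i`), whose arrows are
`(n,i) → (n,i+1)` and `(n,i+1) → (n+1,i)` (all with valuation `(1,1)`), and whose
translation is `τ(n,i) = (n-1,i)`.  Hence the set of predecessors of `(n,i)` is
`{(n,i-1), (n-1,i+1)}` for `i ≥ 2` and `{(n-1,2)}` for `i = 1`. -/

/-- Lemma 1.4(1): let `f` be a function on the vertices of `ℤ[A_∞]` with `f ∘ τ = f`,
`φ` the induced function of the quasi-length (with the convention `φ(0) = 0`), and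
suppose `f(y) + f(τ(y)) = ∑_{x ∈ y⁻} f(x)` for all vertices of quasi-length `≥ ℓ`.
Then `φ(i) = (φ(ℓ) - φ(ℓ-1))·(i - ℓ) + φ(ℓ)` for every `i ≥ ℓ`; and if `f` is bounded,
then `φ` is constant on quasi-lengths `≥ max (ℓ-1) 1`. -/
theorem statement6 (f : ℤ × ℕ → ℕ)
    (htau : ∀ (n : ℤ) (i : ℕ), 1 ≤ i → f (n - 1, i) = f (n, i))
    (φ : ℕ → ℕ) (hφ0 : φ 0 = 0)
    (hφ : ∀ (n : ℤ) (i : ℕ), 1 ≤ i → φ i = f (n, i))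
    (ℓ : ℕ) (hℓ : 1 ≤ ℓ)
    (hadd : ∀ (n : ℤ) (i : ℕ), ℓ ≤ i →
      f (n, i) + f (n - 1, i) =
        if i = 1 then f (n - 1, 2) else f (n, i - 1) + f (n - 1, i + 1)) :
    (∀ i : ℕ, ℓ ≤ i →
      (φ i : ℤ) = ((φ ℓ : ℤ) - (φ (ℓ - 1) : ℤ)) * ((i : ℤ) - (ℓ : ℤ)) + (φ ℓ : ℤ)) ∧
    ((∃ C : ℕ, ∀ (n : ℤ) (i : ℕ), 1 ≤ i → f (n, i) ≤ C) →
      ∀ i i' : ℕ, max (ℓ - 1) 1 ≤ i → max (ℓ - 1) 1 ≤ i' → φ i = φ i') := by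
  -- Constant difference lemma
  have key : ∀ k : ℕ, ℓ ≤ k → (φ (k+1) : ℤ) - φ k = (φ k : ℤ) - φ (k-1) := by
    intro k hk
    have h := hadd 0 k hk
    by_cases h1 : k = 1
    · subst h1
      rw [if_pos rfl, htau 0 1 le_rfl] at h
      have e1 := hφ 0 1 le_rfl
      have e3 := hφ (0-1) 2 (by omega)
      rw [← e1, ← e3] at h
      show (φ 2 : ℤ) - φ 1 = (φ 1 : ℤ) - φ (1 - 1)
      rw [show (1:ℕ) - 1 = 0 from rfl, hφ0]
      omega
    · rw [if_neg h1] at h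
      have e1 := hφ 0 k (by omega)
      have e2 := hφ (0-1) k (by omega)
      have e3 := hφ 0 (k-1) (by omega)
      have e4 := hφ (0-1) (k+1) (by omega)
      rw [← e1, ← e2, ← e3, ← e4] at h
      omega
  have hstep : ∀ i : ℕ, ℓ ≤ i → (φ (i+1) : ℤ) - φ i = (φ ℓ : ℤ) - φ (ℓ-1) := by
    intro i hi
    induction i, hi using Nat.le_induction with
    | base => exact key ℓ le_rfl
    | succ j hj ih =>
      have hk := key (j+1) (by omega)
      have hj1 : j + 1 - 1 = j := by omega
      rw [hj1] at hk
      omega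
  have part1 : ∀ i : ℕ, ℓ ≤ i →
      (φ i : ℤ) = ((φ ℓ : ℤ) - (φ (ℓ - 1) : ℤ)) * ((i : ℤ) - (ℓ : ℤ)) + (φ ℓ : ℤ) := by
    intro i hi
    induction i, hi using Nat.le_induction with
    | base => ring
    | succ j hj ih =>
      have hs := hstep j hj
      push_cast at ih ⊢
      linear_combination ih + hs
  refine ⟨part1, ?_⟩
  rintro ⟨C, hC⟩ i i' hi hi'
  have hφle : ∀ k : ℕ, 1 ≤ k → φ k ≤ C := by
    intro k hk
    rw [hφ 0 k hk]
    exact hC 0 k hk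
  have hd0 : (φ ℓ : ℤ) - φ (ℓ-1) = 0 := by
    by_contra h
    rcases lt_or_gt_of_ne h with hneg | hpos
    · have h1 := part1 (ℓ + φ ℓ + 1) (by omega)
      have hcast : ((ℓ + φ ℓ + 1 : ℕ) : ℤ) - (ℓ:ℤ) = (φ ℓ : ℤ) + 1 := by push_cast; ring
      rw [hcast] at h1
      have hge : (0:ℤ) ≤ (φ (ℓ + φ ℓ + 1) : ℤ) := Int.natCast_nonneg _
      nlinarith
    · have h1 := part1 (ℓ + C + 1) (by omega)
      have hcast : ((ℓ + C + 1 : ℕ) : ℤ) - (ℓ:ℤ) = (C : ℤ) + 1 := by push_cast; ring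
      rw [hcast] at h1
      have hle := hφle (ℓ + C + 1) (by omega)
      nlinarith [Int.natCast_nonneg (φ ℓ), (Int.ofNat_le.mpr hle : (φ (ℓ + C + 1) : ℤ) ≤ C)]
  have hconst : ∀ j : ℕ, max (ℓ - 1) 1 ≤ j → φ j = φ ℓ := by
    intro j hj
    by_cases hjl : ℓ ≤ j
    · have := part1 j hjl
      rw [hd0] at this
      omega
    · have hje : j = ℓ - 1 := by omega
      subst hje
      omega
  rw [hconst i hi, hconst i' hi']
end

section
/- Let f : ℤ × ℕ₊ → ℕ₀ be a subadditive function on ℤ[A_∞] with f ∘ τ = f (write φ(i) for the common value of f on vertices of quasi-length i), and let ℓ ≥ 1 be such that f(y) + f(τ(y)) = Σ_{x ∈ y⁻} f(x) for every vertex y of quasi-length ≥ ℓ. Assume (a) φ(1) = φ(2), and (b) φ(i) ≥ φ(1) for every i with 1 ≤ i < ℓ. Then f is constant: f(x) = φ(1) for every vertex x of ℤ[A_∞]. -/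
/- We work in the stable translation quiver `ℤ[A_∞]`, whose vertices are the pairs
`(n, i) ∈ ℤ × ℕ` with `i ≥ 1` (the quasi-length of `(n,i)` being `i`), whose arrows are
`(n,i) → (n,i+1)` and `(n,i+1) → (n+1,i)` (all with valuation `(1,1)`), and whose
translation is `τ(n,i) = (n-1,i)`.  Hence the set of predecessors of `(n,i)` is
`{(n,i-1), (n-1,i+1)}` for `i ≥ 2` and `{(n-1,2)}` for `i = 1`. -/

/-- Lemma 1.4(2): let `f` be a subadditive function on `ℤ[A_∞]` with `f ∘ τ = f`,
`φ` the induced function of the quasi-length, and suppose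
`f(y) + f(τ(y)) = ∑_{x ∈ y⁻} f(x)` holds for all vertices of quasi-length `≥ ℓ`.  If
(a) `φ(1) = φ(2)` and (b) `φ(i) ≥ φ(1)` for all `1 ≤ i < ℓ`, then `f` is constant. -/
theorem statement7 (f : ℤ × ℕ → ℕ)
    (hsub : ∀ (n : ℤ) (i : ℕ), 1 ≤ i →
      (if i = 1 then f (n - 1, 2) else f (n, i - 1) + f (n - 1, i + 1)) ≤
        f (n, i) + f (n - 1, i))
    (htau : ∀ (n : ℤ) (i : ℕ), 1 ≤ i → f (n - 1, i) = f (n, i))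
    (φ : ℕ → ℕ)
    (hφ : ∀ (n : ℤ) (i : ℕ), 1 ≤ i → φ i = f (n, i))
    (ℓ : ℕ) (hℓ : 1 ≤ ℓ)
    (hadd : ∀ (n : ℤ) (i : ℕ), ℓ ≤ i →
      f (n, i) + f (n - 1, i) =
        if i = 1 then f (n - 1, 2) else f (n, i - 1) + f (n - 1, i + 1))
    (h12 : φ 1 = φ 2)
    (hge : ∀ i : ℕ, 1 ≤ i → i < ℓ → φ 1 ≤ φ i) :
    ∀ (n : ℤ) (i : ℕ), 1 ≤ i → f (n, i) = φ 1 := by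
  -- Subadditivity in terms of φ
  have hs : ∀ k : ℕ, φ (k+1) + φ (k+3) ≤ 2 * φ (k+2) := by
    intro k
    have h := hsub 0 (k+2) (by omega)
    rw [if_neg (by omega)] at h
    have hr : (k+2) - 1 = k+1 := by omega
    have hr2 : k+2+1 = k+3 := by omega
    rw [hr, hr2] at h
    have e1 := hφ (0:ℤ) (k+1) (by omega)
    have e2 := hφ (0:ℤ) (k+2) (by omega)
    have e2' := hφ ((0:ℤ)-1) (k+2) (by omega)
    have e3 := hφ ((0:ℤ)-1) (k+3) (by omega)
    omega
  -- Additivity for quasi-length ≥ ℓ, in terms of φ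
  have ha : ∀ k : ℕ, ℓ ≤ k + 2 → φ (k+1) + φ (k+3) = 2 * φ (k+2) := by
    intro k hk
    have h := hadd 0 (k+2) hk
    rw [if_neg (by omega)] at h
    have hr : (k+2) - 1 = k+1 := by omega
    have hr2 : k+2+1 = k+3 := by omega
    rw [hr, hr2] at h
    have e1 := hφ (0:ℤ) (k+1) (by omega)
    have e2 := hφ (0:ℤ) (k+2) (by omega)
    have e2' := hφ ((0:ℤ)-1) (k+2) (by omega)
    have e3 := hφ ((0:ℤ)-1) (k+3) (by omega)
    omega
  -- differences
  set d : ℕ → ℤ := fun k => (φ (k+2) : ℤ) - (φ (k+1) : ℤ) with hd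
  have d0 : d 0 = 0 := by simp [hd]; omega
  have dmono : ∀ k : ℕ, d (k+1) ≤ d k := by
    intro k
    have h := hs k
    have a1 : k+1+1 = k+2 := by omega
    have a2 : k+1+2 = k+3 := by omega
    simp only [hd]
    rw [a1, a2]
    push_cast
    omega
  have dmono' : ∀ j k : ℕ, j ≤ k → d k ≤ d j := by
    intro j k hjk
    induction k with
    | zero => simp [Nat.le_zero.mp hjk]
    | succ m ih =>
      rcases Nat.lt_or_ge j (m+1) with h | h
      · exact le_trans (dmono m) (ih (by omega))
      · have : j = m + 1 := by omega
        simp [this]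
  have dconst : ∀ k : ℕ, ℓ ≤ k → d k = d ℓ := by
    intro k hk
    induction k with
    | zero => omega
    | succ m ih =>
      rcases Nat.lt_or_ge m ℓ with h | h
      · have : m + 1 = ℓ := by omega
        simp [this]
      · have he := ha m (by omega)
        have : d (m+1) = d m := by
          have a1 : m+1+1 = m+2 := by omega
          have a2 : m+1+2 = m+3 := by omega
          simp only [hd]
          rw [a1, a2]
          push_cast
          omega
        rw [this, ih h]
  -- d ℓ = 0 : otherwise φ goes to -∞
  have dl0 : d ℓ = 0 := by
    have hle : d ℓ ≤ 0 := by
      have := dmono' 0 ℓ (by omega)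
      omega
    rcases lt_or_eq_of_le hle with hlt | he
    · exfalso
      have lin : ∀ j : ℕ, (φ (ℓ+1+j) : ℤ) = (φ (ℓ+1) : ℤ) + j * d ℓ := by
        intro j
        induction j with
        | zero => simp
        | succ m ih =>
          have hc := dconst (ℓ + m) (by omega)
          have : (φ (ℓ+m+2) : ℤ) - (φ (ℓ+m+1) : ℤ) = d ℓ := by
            rw [← hc]
          have harr : ℓ + 1 + (m+1) = ℓ + m + 2 := by omega
          rw [harr]
          push_cast
          have harr2 : ℓ + 1 + m = ℓ + m + 1 := by omega
          rw [harr2] at ih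
          push_cast at ih
          linarith
      have := lin (φ (ℓ+1) + 1)
      have hnn : (0:ℤ) ≤ (φ (ℓ+1+(φ (ℓ+1)+1)) : ℤ) := by positivity
      rw [this] at hnn
      push_cast at hnn
      nlinarith
    · omega
  -- all differences vanish
  have dall : ∀ k : ℕ, d k = 0 := by
    intro k
    rcases Nat.lt_or_ge k ℓ with h | h
    · have h1 := dmono' k ℓ (by omega)
      have h2 := dmono' 0 k (by omega)
      omega
    · rw [dconst k h, dl0]
  -- φ is constant
  have key : ∀ k : ℕ, φ (k+1) = φ 1 := by
    intro k
    induction k with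
    | zero => rfl
    | succ m ih =>
      have := dall m
      simp only [hd] at this
      have a1 : m+1+1 = m+2 := by omega
      rw [a1]
      omega
  intro n i hi
  have e := hφ n i hi
  have : φ i = φ 1 := by
    obtain ⟨k, rfl⟩ : ∃ k, i = k + 1 := ⟨i - 1, by omega⟩
    exact key k
  omega
end

section
/- Let k be an algebraically closed field, Λ a finite-dimensional associative unital k-algebra, K a field extension of k, and M a Λ-module that is finite-dimensional over k. Then M is projective as a Λ-module if and only if M_K is projective as a Λ_K-module. -/
open TensorProduct

section BaseChange

variable (k K Λ M : Type*)
variable [Field k] [Field K] [Algebra k K]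
variable [Ring Λ] [Algebra k Λ]
variable [AddCommGroup M] [Module k M] [Module Λ M] [IsScalarTower k Λ M]

/-- The action of `K` on the right-hand tensor factor of `M_K = M ⊗_k K`,
as a ring homomorphism `K →+* End_k (M ⊗_k K)`. -/
noncomputable def rightSmulHom : K →+* Module.End k (M ⊗[k] K) where
  toFun c := LinearMap.lTensor M (LinearMap.mulLeft k c)
  map_one' := by
    show LinearMap.lTensor M (LinearMap.mulLeft k (1 : K)) = 1
    rw [LinearMap.mulLeft_one, LinearMap.lTensor_id]; rfl
  map_mul' c d := by
    show LinearMap.lTensor M (LinearMap.mulLeft k (c * d)) =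
      LinearMap.lTensor M (LinearMap.mulLeft k c) * LinearMap.lTensor M (LinearMap.mulLeft k d)
    rw [LinearMap.mulLeft_mul, LinearMap.lTensor_comp]; rfl
  map_zero' := by
    show LinearMap.lTensor M (LinearMap.mulLeft k (0 : K)) = 0
    rw [LinearMap.mulLeft_zero_eq_zero, LinearMap.lTensor_zero]
  map_add' c d := by
    show LinearMap.lTensor M (LinearMap.mulLeft k (c + d)) =
      LinearMap.lTensor M (LinearMap.mulLeft k c) + LinearMap.lTensor M (LinearMap.mulLeft k d)
    rw [show LinearMap.mulLeft k (c + d) = LinearMap.mulLeft k c + LinearMap.mulLeft k d from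
      LinearMap.ext fun x => add_mul c d x, LinearMap.lTensor_add]

/-- `M_K = M ⊗_k K` as a `K`-module (via the right-hand tensor factor). -/
noncomputable def modKMK : Module K (M ⊗[k] K) :=
  Module.compHom _ (rightSmulHom k K M)

/-- `M_K = M ⊗_k K` as a module over `Λ_K = Λ ⊗_k K`, with
`(λ ⊗ a) • (m ⊗ b) = (λ • m) ⊗ (a*b)`. -/
noncomputable def modLamKMK : Module (Λ ⊗[k] K) (M ⊗[k] K) := by
  letI : Module K (M ⊗[k] K) := modKMK k K M
  haveI : IsScalarTower k K (M ⊗[k] K) := by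
    constructor
    intro a c x
    induction x using TensorProduct.induction_on with
    | zero => simp only [smul_zero]
    | tmul m b =>
        show (LinearMap.lTensor M (LinearMap.mulLeft k (a • c))) (m ⊗ₜ[k] b) =
          a • (LinearMap.lTensor M (LinearMap.mulLeft k c)) (m ⊗ₜ[k] b)
        rw [LinearMap.lTensor_tmul, LinearMap.lTensor_tmul, LinearMap.mulLeft_apply,
          LinearMap.mulLeft_apply, Algebra.smul_mul_assoc, tmul_smul]
    | add x y hx hy =>
        show (LinearMap.lTensor M (LinearMap.mulLeft k (a • c))) (x + y) = _
        rw [map_add]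
        show _ = a • ((LinearMap.lTensor M (LinearMap.mulLeft k c)) (x + y))
        rw [map_add, smul_add]
        exact congrArg₂ (· + ·) hx hy
  haveI : SMulCommClass Λ K (M ⊗[k] K) := by
    constructor
    intro l c x
    show l • (LinearMap.lTensor M (LinearMap.mulLeft k c)) x =
      (LinearMap.lTensor M (LinearMap.mulLeft k c)) (l • x)
    induction x using TensorProduct.induction_on with
    | zero => simp only [smul_zero, map_zero]
    | tmul m b =>
        rw [smul_tmul', LinearMap.lTensor_tmul, smul_tmul', LinearMap.lTensor_tmul]
    | add x y hx hy => rw [smul_add, map_add, map_add, smul_add, hx, hy]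
  exact TensorProduct.Algebra.module

end BaseChange

section Aux

variable (k K Λ : Type*)
variable [Field k] [Field K] [Algebra k K]
variable [Ring Λ] [Algebra k Λ]
variable (M N : Type*)
variable [AddCommGroup M] [Module k M] [Module Λ M] [IsScalarTower k Λ M]
variable [AddCommGroup N] [Module k N] [Module Λ N] [IsScalarTower k Λ N]

lemma modLamKMK_smul_tmul (l : Λ) (c : K) (m : M) (b : K) :
    letI := modLamKMK k K Λ M
    (l ⊗ₜ[k] c) • (m ⊗ₜ[k] b) = (l • m) ⊗ₜ[k] (c * b) := rfl

variable {k K Λ M N}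

/-- Build a `Λ ⊗ K`-linear map from a `k`-linear map commuting with pure-tensor scalars. -/
noncomputable def mkLamK (f : M ⊗[k] K →ₗ[k] N ⊗[k] K)
    (h : ∀ (l : Λ) (c : K) (x : M ⊗[k] K),
      letI := modLamKMK k K Λ M
      letI := modLamKMK k K Λ N
      f ((l ⊗ₜ[k] c) • x) = (l ⊗ₜ[k] c) • f x) :
    letI := modLamKMK k K Λ M
    letI := modLamKMK k K Λ N
    M ⊗[k] K →ₗ[Λ ⊗[k] K] N ⊗[k] K :=
  letI := modLamKMK k K Λ M
  letI := modLamKMK k K Λ N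
  { toFun := f
    map_add' := f.map_add
    map_smul' := by
      intro r x
      simp only [RingHom.id_apply]
      induction r using TensorProduct.induction_on with
      | zero => rw [zero_smul, zero_smul, map_zero]
      | tmul l c => exact h l c x
      | add r s hr hs => rw [add_smul, add_smul, map_add, hr, hs] }

/-- base change of a `Λ`-linear map. -/
noncomputable def lamKBaseChange (f : M →ₗ[Λ] N) :
    letI := modLamKMK k K Λ M
    letI := modLamKMK k K Λ N
    M ⊗[k] K →ₗ[Λ ⊗[k] K] N ⊗[k] K :=
  mkLamK (LinearMap.rTensor K (f.restrictScalars k)) (by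
    letI := modLamKMK k K Λ M
    letI := modLamKMK k K Λ N
    intro l c x
    induction x using TensorProduct.induction_on with
    | zero => simp only [smul_zero, map_zero]
    | tmul m b =>
        rw [modLamKMK_smul_tmul, LinearMap.rTensor_tmul, LinearMap.rTensor_tmul,
          modLamKMK_smul_tmul]
        simp only [LinearMap.coe_restrictScalars, map_smul]
    | add x y hx hy => simp only [smul_add, map_add, hx, hy])



/-- Build a `Λ ⊗ K`-linear map between arbitrary `Λ ⊗ K`-modules from an additive map
commuting with pure-tensor scalars. -/
noncomputable def mkLamKGen {X Y : Type*} [AddCommGroup X] [AddCommGroup Y]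
    [Module (Λ ⊗[k] K) X] [Module (Λ ⊗[k] K) Y] (f : X → Y)
    (hadd : ∀ a b : X, f (a + b) = f a + f b)
    (h : ∀ (l : Λ) (c : K) (x : X), f ((l ⊗ₜ[k] c) • x) = (l ⊗ₜ[k] c) • f x) :
    X →ₗ[Λ ⊗[k] K] Y where
  toFun := f
  map_add' := hadd
  map_smul' := by
    intro r x
    simp only [RingHom.id_apply]
    induction r using TensorProduct.induction_on with
    | zero =>
        have h0 : f 0 = 0 := by
          have h00 := hadd 0 0
          rw [add_zero] at h00
          exact left_eq_add.mp h00
        rw [zero_smul, zero_smul, h0]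
    | tmul l c => exact h l c x
    | add r s hr hs => rw [add_smul, add_smul, hadd, hr, hs]

end Aux

section Main

variable (k K Λ : Type*)
variable [Field k] [Field K] [Algebra k K]
variable [Ring Λ] [Algebra k Λ]
variable (M : Type*)
variable [AddCommGroup M] [Module k M] [Module Λ M] [IsScalarTower k Λ M]

lemma smulCommClass_of_tower : SMulCommClass k Λ M :=
  ⟨fun a l n => by
    rw [← algebraMap_smul Λ a n, ← algebraMap_smul Λ a (l • n), ← mul_smul, ← mul_smul,
      Algebra.commutes]⟩

set_option maxHeartbeats 1000000 in
theorem fwd (hM : Module.Projective Λ M) :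
    @Module.Projective (Λ ⊗[k] K) _ (M ⊗[k] K) _ (modLamKMK k K Λ M) := by
  classical
  letI := modLamKMK k K Λ M
  letI := modLamKMK k K Λ (M →₀ Λ)
  obtain ⟨s, hs⟩ := Module.projective_def.mp hM
  set base := TensorProduct.finsuppLeft k k Λ K M with hbase
  set B := base.toLinearMap with hB
  have key : ∀ (m : M) (ν : Λ) (d : K),
      B (Finsupp.single m ν ⊗ₜ[k] d) = Finsupp.single m (ν ⊗ₜ[k] d) := by
    intro m ν d
    show base (Finsupp.single m ν ⊗ₜ[k] d) = Finsupp.single m (ν ⊗ₜ[k] d)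
    rw [show (Finsupp.single m ν ⊗ₜ[k] d) = base.symm (Finsupp.single m (ν ⊗ₜ[k] d)) from
      (TensorProduct.finsuppLeft_symm_apply_single m ν d).symm, base.apply_symm_apply]
  have hsm : ∀ (l : Λ) (c : K) (x : (M →₀ Λ) ⊗[k] K),
      B ((l ⊗ₜ[k] c) • x) = (l ⊗ₜ[k] c) • B x := by
    intro l c x
    induction x using TensorProduct.induction_on with
    | zero => simp only [smul_zero, map_zero]
    | tmul g b =>
        rw [modLamKMK_smul_tmul]
        induction g using Finsupp.induction_linear with
        | zero => simp only [smul_zero, zero_tmul, map_zero]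
        | add g₁ g₂ h₁ h₂ =>
            rw [smul_add, add_tmul, map_add, add_tmul, map_add, smul_add, h₁, h₂]
        | single m μ =>
            rw [Finsupp.smul_single, key, key, Finsupp.smul_single, smul_eq_mul, smul_eq_mul,
              Algebra.TensorProduct.tmul_mul_tmul]
    | add x y hx hy => simp only [smul_add, map_add, hx, hy]
  have hsm2 : ∀ (l : Λ) (c : K) (y : M →₀ (Λ ⊗[k] K)),
      base.symm ((l ⊗ₜ[k] c) • y) = (l ⊗ₜ[k] c) • base.symm y := by
    intro l c y
    apply base.injective
    rw [base.apply_symm_apply]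
    have h' : base ((l ⊗ₜ[k] c) • base.symm y) = (l ⊗ₜ[k] c) • base (base.symm y) :=
      hsm l c (base.symm y)
    rw [h', base.apply_symm_apply]
  haveI hfree : Module.Free (Λ ⊗[k] K) (M →₀ (Λ ⊗[k] K)) := Module.Free.finsupp _ _ _
  haveI hproj : Module.Projective (Λ ⊗[k] K) (M →₀ (Λ ⊗[k] K)) :=
    Module.Projective.of_free
  haveI : Module.Projective (Λ ⊗[k] K) ((M →₀ Λ) ⊗[k] K) :=
    Module.Projective.of_split
      (mkLamKGen (k := k) (K := K) (Λ := Λ) (fun x => base x) base.map_add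
        (fun l c x => by simpa [hB] using hsm l c x))
      (mkLamKGen (k := k) (K := K) (Λ := Λ) (fun y => base.symm y) base.symm.map_add hsm2)
      (LinearMap.ext fun x => base.symm_apply_apply x)
  refine Module.Projective.of_split (lamKBaseChange (k := k) (K := K) s)
    (lamKBaseChange (k := k) (K := K) (Finsupp.linearCombination Λ (id : M → M))) ?_
  apply LinearMap.ext
  intro x
  show LinearMap.rTensor K ((Finsupp.linearCombination Λ (id : M → M)).restrictScalars k)
    (LinearMap.rTensor K (s.restrictScalars k) x) = x
  rw [← LinearMap.comp_apply, ← LinearMap.rTensor_comp]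
  have hcomp : ((Finsupp.linearCombination Λ (id : M → M)).restrictScalars k) ∘ₗ
      (s.restrictScalars k) = LinearMap.id := by
    apply LinearMap.ext
    intro m
    exact hs m
  rw [hcomp, LinearMap.rTensor_id, LinearMap.id_apply]

set_option maxHeartbeats 1000000 in
theorem bwd (hMK : @Module.Projective (Λ ⊗[k] K) _ (M ⊗[k] K) _ (modLamKMK k K Λ M)) :
    Module.Projective Λ M := by
  classical
  letI := modLamKMK k K Λ M
  letI := modLamKMK k K Λ (M →₀ Λ)
  haveI := hMK
  haveI : SMulCommClass k Λ M := smulCommClass_of_tower k Λ M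
  haveI : SMulCommClass k Λ (M →₀ Λ) := smulCommClass_of_tower k Λ (M →₀ Λ)
  obtain ⟨φ, hφ⟩ := (Algebra.linearMap k K).exists_leftInverse_of_injective
    (LinearMap.ker_eq_bot.mpr (algebraMap k K).injective)
  have hφ1 : φ (1 : K) = 1 := by
    have h1 := LinearMap.ext_iff.mp hφ (1 : k)
    simpa using h1
  set π : (M →₀ Λ) →ₗ[Λ] M := Finsupp.linearCombination Λ (id : M → M) with hπdef
  have hπk : Function.Surjective (π.restrictScalars k : (M →₀ Λ) →ₗ[k] M) := by
    intro m
    exact ⟨Finsupp.single m 1, by simp [hπdef]⟩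
  have hπsurj : Function.Surjective (lamKBaseChange (k := k) (K := K) π) := by
    intro y
    obtain ⟨x, hx⟩ := LinearMap.rTensor_surjective K hπk y
    exact ⟨x, hx⟩
  obtain ⟨G, hG⟩ := Module.projective_lifting_property (lamKBaseChange (k := k) (K := K) π)
    LinearMap.id hπsurj
  set rM : M ⊗[k] K →ₗ[k] M :=
    (TensorProduct.rid k M).toLinearMap ∘ₗ LinearMap.lTensor M φ with hrM
  set rP : (M →₀ Λ) ⊗[k] K →ₗ[k] (M →₀ Λ) :=
    (TensorProduct.rid k (M →₀ Λ)).toLinearMap ∘ₗ LinearMap.lTensor (M →₀ Λ) φ with hrP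
  have rM_tmul : ∀ (y : M) (c : K), rM (y ⊗ₜ[k] c) = φ c • y := by
    intro y c
    simp [hrM]
  have rP_tmul : ∀ (y : M →₀ Λ) (c : K), rP (y ⊗ₜ[k] c) = φ c • y := by
    intro y c
    simp [hrP]
  have rP_lsmul : ∀ (l : Λ) (z : (M →₀ Λ) ⊗[k] K),
      rP ((l ⊗ₜ[k] (1 : K)) • z) = l • rP z := by
    intro l z
    induction z using TensorProduct.induction_on with
    | zero => simp only [smul_zero, map_zero]
    | tmul g c =>
        rw [modLamKMK_smul_tmul, one_mul, rP_tmul, rP_tmul, smul_comm]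
    | add x y hx hy => simp only [smul_add, map_add, hx, hy]
  have nat : ∀ z : (M →₀ Λ) ⊗[k] K,
      (π.restrictScalars k) (rP z) = rM (LinearMap.rTensor K (π.restrictScalars k) z) := by
    intro z
    induction z using TensorProduct.induction_on with
    | zero => simp only [map_zero]
    | tmul g c =>
        rw [rP_tmul, LinearMap.rTensor_tmul, rM_tmul, map_smul]
    | add x y hx hy => simp only [map_add, hx, hy]
  let i : M →ₗ[Λ] (M →₀ Λ) :=
    { toFun := fun m => rP (G (m ⊗ₜ[k] (1 : K)))
      map_add' := by
        intro m₁ m₂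
        show rP (G ((m₁ + m₂) ⊗ₜ[k] (1 : K))) =
          rP (G (m₁ ⊗ₜ[k] (1 : K))) + rP (G (m₂ ⊗ₜ[k] (1 : K)))
        rw [add_tmul, map_add, map_add]
      map_smul' := by
        intro l m
        show rP (G ((l • m) ⊗ₜ[k] (1 : K))) = l • rP (G (m ⊗ₜ[k] (1 : K)))
        have h1 : (l • m) ⊗ₜ[k] (1 : K) = (l ⊗ₜ[k] (1 : K)) • (m ⊗ₜ[k] (1 : K)) := by
          rw [modLamKMK_smul_tmul, one_mul]
        rw [h1, G.map_smul, rP_lsmul] }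
  have hsplit : π ∘ₗ i = LinearMap.id := by
    apply LinearMap.ext
    intro m
    show π (rP (G (m ⊗ₜ[k] (1 : K)))) = m
    have h2 : (π.restrictScalars k) (rP (G (m ⊗ₜ[k] (1 : K)))) = m := by
      rw [nat]
      have h3 := LinearMap.ext_iff.mp hG (m ⊗ₜ[k] (1 : K))
      have h4 : LinearMap.rTensor K (π.restrictScalars k) (G (m ⊗ₜ[k] (1 : K)))
          = m ⊗ₜ[k] (1 : K) := h3
      rw [h4, rM_tmul, hφ1, one_smul]
    exact h2
  exact Module.Projective.of_split i π hsplit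

end Main

/-- Lemma 2.1(2): let `k` be an algebraically closed field, `Λ` a finite-dimensional
`k`-algebra, `K : k` a field extension and `M` a finite-dimensional `Λ`-module.  Then
`M` is a projective `Λ`-module if and only if `M_K = M ⊗_k K` is a projective
`Λ_K`-module. -/
theorem statement9 (k K Λ M : Type*)
    [Field k] [IsAlgClosed k] [Field K] [Algebra k K]
    [Ring Λ] [Algebra k Λ] [FiniteDimensional k Λ]
    [AddCommGroup M] [Module k M] [Module Λ M] [IsScalarTower k Λ M]
    [FiniteDimensional k M] :
    letI : Module (Λ ⊗[k] K) (M ⊗[k] K) := modLamKMK k K Λ M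
    (Module.Projective Λ M ↔ Module.Projective (Λ ⊗[k] K) (M ⊗[k] K)) := by
  exact ⟨fun h => fwd k K Λ M h, fun h => bwd k K Λ M h⟩
end

section
/- Let p be a prime and P a nontrivial finite p-group. If E₀ is a maximal elementary abelian subgroup of P with |E₀| = p, then every maximal elementary abelian subgroup F of P equals E₀; in particular E₀ is the unique maximal elementary abelian subgroup of P. -/
/-- A subgroup `E` of a group `G` is an elementary abelian `p`-subgroup if it is
commutative and every element `x ∈ E` satisfies `x^p = 1`. -/
def IsElementaryAbelian (p : ℕ) {G : Type*} [Group G] (E : Subgroup G) : Prop :=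
  (∀ x ∈ E, ∀ y ∈ E, x * y = y * x) ∧ ∀ x ∈ E, x ^ p = 1

lemma central_prime_mem_maximal (p : ℕ) (hp : p.Prime) {P : Type*} [Group P]
    {z : P} (hz : z ∈ Subgroup.center P) (hzp : z ^ p = 1)
    {F : Subgroup P} (hF : Maximal (IsElementaryAbelian p) F) : z ∈ F := by
  have hnormal : (Subgroup.zpowers z).Normal := by
    constructor
    intro n hn g
    rcases hn with ⟨k, rfl⟩
    have : g * z ^ k * g⁻¹ = z ^ k := by
      rw [Subgroup.mem_center_iff.mp (Subgroup.zpow_mem (Subgroup.center P) hz k) g]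
      group
    rw [this]
    exact ⟨k, rfl⟩
  set K := F ⊔ Subgroup.zpowers z with hK
  have hmem : ∀ x : P, x ∈ K → ∃ f ∈ F, ∃ k : ℤ, x = f * z ^ k := by
    intro x hx
    have : x ∈ (↑(F ⊔ Subgroup.zpowers z) : Set P) := hx
    rw [Subgroup.mul_normal] at this
    rcases this with ⟨f, hf, w, hw, rfl⟩
    rcases hw with ⟨k, rfl⟩
    exact ⟨f, hf, k, rfl⟩
  have hzcomm : ∀ (k : ℤ) (g : P), z ^ k * g = g * z ^ k := fun k g =>
    (Subgroup.mem_center_iff.mp (Subgroup.zpow_mem (Subgroup.center P) hz k) g).symm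
  have hKea : IsElementaryAbelian p K := by
    constructor
    · intro x hx y hy
      obtain ⟨f, hf, a, rfl⟩ := hmem x hx
      obtain ⟨g, hg, b, rfl⟩ := hmem y hy
      have hfg := hF.1.1 f hf g hg
      calc f * z ^ a * (g * z ^ b) = f * g * (z ^ a * z ^ b) := by
            rw [mul_assoc, mul_assoc, ← mul_assoc (z ^ a), hzcomm a g, mul_assoc]
        _ = g * f * (z ^ b * z ^ a) := by
            rw [hfg, ← zpow_add, ← zpow_add, add_comm]
        _ = g * z ^ b * (f * z ^ a) := by
            rw [mul_assoc, mul_assoc, ← mul_assoc (z ^ b), hzcomm b f, mul_assoc]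
    · intro x hx
      obtain ⟨f, hf, a, rfl⟩ := hmem x hx
      have hcomm : Commute f (z ^ a) := (hzcomm a f).symm
      rw [hcomm.mul_pow, hF.1.2 f hf, one_mul, ← zpow_natCast, ← zpow_mul,
        mul_comm, zpow_mul, zpow_natCast, hzp, one_zpow]
  have hle : K ≤ F := hF.2 hKea le_sup_left
  exact hle (Subgroup.mem_sup_right (Subgroup.mem_zpowers z))

/-- Let `P` be a nontrivial finite `p`-group.  If `E₀` is a maximal elementary abelian
subgroup of `P` with `|E₀| = p`, then every maximal elementary abelian subgroup `F` of
`P` equals `E₀`; in particular, `E₀` is the unique maximal elementary abelian subgroup. -/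
theorem statement14 (p : ℕ) (hp : p.Prime) (P : Type*) [Group P] [Finite P]
    (hP : IsPGroup p P) [Nontrivial P]
    (E₀ : Subgroup P) (hE₀ : Maximal (IsElementaryAbelian p) E₀)
    (hcard : Nat.card E₀ = p) :
    ∀ F : Subgroup P, Maximal (IsElementaryAbelian p) F → F = E₀ := by
  -- find a central element of order p
  haveI : Fact p.Prime := ⟨hp⟩
  haveI hcn : Nontrivial (Subgroup.center P) := hP.center_nontrivial
  obtain ⟨⟨g, hgc⟩, hg1⟩ := exists_ne (1 : Subgroup.center P)
  have hgne : g ≠ 1 := by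
    simpa [Subtype.ext_iff] using hg1
  obtain ⟨m, hm⟩ := (IsPGroup.iff_orderOf.mp hP) g
  have hmpos : m ≠ 0 := by
    rintro rfl
    exact hgne (orderOf_eq_one_iff.mp (by simpa using hm))
  set z := g ^ (p ^ (m - 1)) with hzdef
  have hzorder : orderOf z = p := by
    rw [hzdef, orderOf_pow, hm,
      Nat.gcd_eq_right (pow_dvd_pow p (Nat.sub_le m 1)),
      Nat.pow_div (Nat.sub_le m 1) hp.pos]
    have h1 : m - (m - 1) = 1 := by omega
    rw [h1, pow_one]
  have hzc : z ∈ Subgroup.center P := Subgroup.pow_mem _ hgc _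
  have hzp : z ^ p = 1 := by rw [← hzorder]; exact pow_orderOf_eq_one z
  have hzE : z ∈ E₀ := central_prime_mem_maximal p hp hzc hzp hE₀
  intro F hF
  have hzF : z ∈ F := central_prime_mem_maximal p hp hzc hzp hF
  -- E₀ is generated by z
  set z' : E₀ := ⟨z, hzE⟩ with hz'
  have horder' : orderOf z' = p := by
    rw [← hzorder]
    exact (orderOf_injective E₀.subtype E₀.subtype_injective z').symm
  have htop : Subgroup.zpowers z' = ⊤ := by
    apply Subgroup.eq_top_of_card_eq
    rw [Nat.card_zpowers, horder', hcard]
  have hE₀le : E₀ ≤ F := by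
    intro x hx
    have : (⟨x, hx⟩ : E₀) ∈ Subgroup.zpowers z' := htop ▸ Subgroup.mem_top _
    obtain ⟨k, hk⟩ := this
    have : x = z ^ k := by
      have := congrArg (Subgroup.subtype E₀) hk
      simpa using this.symm
    rw [this]
    exact Subgroup.zpow_mem F hzF k
  exact le_antisymm (hE₀.2 hF.1 hE₀le) hE₀le
end

section
/- Let G be a finite group and p a prime. If E₀ is a maximal elementary abelian p-subgroup of G with |E₀| = p, then every maximal elementary abelian p-subgroup E of G is conjugate to E₀ (there exists g ∈ G with gEg⁻¹ = E₀); in particular, every maximal elementary abelian p-subgroup of G has order p. -/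
section Aux

open Subgroup

variable {G : Type*} [Group G] {p : ℕ}

/-- The join of two elementary abelian subgroups that commute elementwise is
elementary abelian. -/
lemma IsElementaryAbelian.sup {A B : Subgroup G} (hA : IsElementaryAbelian p A)
    (hB : IsElementaryAbelian p B) (hcomm : ∀ a ∈ A, ∀ b ∈ B, a * b = b * a) :
    IsElementaryAbelian p (A ⊔ B) := by
  have hS : A ⊔ B = closure ((A : Set G) ∪ (B : Set G)) := by
    rw [Subgroup.closure_union, closure_eq, closure_eq]
  set S : Set G := (A : Set G) ∪ (B : Set G) with hSdef
  have hSS : ∀ a ∈ S, ∀ b ∈ S, a * b = b * a := by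
    rintro a (ha | ha) b (hb | hb)
    · exact hA.1 a ha b hb
    · exact hcomm a ha b hb
    · exact (hcomm b hb a ha).symm
    · exact hB.1 a ha b hb
  have h1 : closure S ≤ centralizer S := by
    rw [closure_le]
    intro a ha
    exact mem_centralizer_iff.2 fun b hb => hSS b hb a ha
  have h2 : closure S ≤ centralizer (closure S : Set G) := by
    rw [closure_le]
    intro a ha
    exact mem_centralizer_iff.2 fun b hb => (mem_centralizer_iff.1 (h1 hb) a ha).symm
  have comm : ∀ x ∈ closure S, ∀ y ∈ closure S, x * y = y * x := fun x hx y hy =>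
    mem_centralizer_iff.1 (h2 hy) x hx
  have hpow : ∀ x ∈ closure S, x ^ p = 1 := by
    intro x hx
    induction hx using closure_induction with
    | mem a ha => rcases ha with h | h
                  · exact hA.2 a h
                  · exact hB.2 a h
    | one => exact one_pow p
    | mul a b ha hb iha ihb =>
        have hc : Commute a b := comm a ha b hb
        rw [hc.mul_pow, iha, ihb, one_mul]
    | inv a ha iha => rw [inv_pow, iha, inv_one]
  rw [hS]
  exact ⟨comm, hpow⟩

lemma IsElementaryAbelian.map (e : MulAut G) {E : Subgroup G}
    (h : IsElementaryAbelian p E) :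
    IsElementaryAbelian p (E.map e.toMonoidHom) := by
  constructor
  · rintro x ⟨a, ha, rfl⟩ y ⟨b, hb, rfl⟩
    rw [← map_mul, ← map_mul, h.1 a ha b hb]
  · rintro x ⟨a, ha, rfl⟩
    rw [← map_pow, h.2 a ha, map_one]

lemma Maximal.conjMap (g : G) {E : Subgroup G}
    (h : Maximal (IsElementaryAbelian p) E) :
    Maximal (IsElementaryAbelian p) (E.map (MulAut.conj g).toMonoidHom) := by
  constructor
  · exact h.1.map _
  · intro K hK hle
    have h2 : E ≤ K.map (MulAut.conj g⁻¹).toMonoidHom := by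
      intro x hx
      exact ⟨(MulAut.conj g) x, hle ⟨x, hx, rfl⟩, by simp [MulAut.conj_apply]; group⟩
    have h3 := h.2 (hK.map _) h2
    intro x hx
    have hx' : (MulAut.conj g⁻¹) x ∈ E := h3 ⟨x, hx, rfl⟩
    exact ⟨_, hx', by simp [MulAut.conj_apply]; group⟩

end Aux

/-- Let `G` be a finite group and `p` a prime.  If `E₀` is a maximal elementary abelian
`p`-subgroup of `G` with `|E₀| = p`, then every maximal elementary abelian `p`-subgroup
`E` of `G` is conjugate to `E₀`, i.e. `gEg⁻¹ = E₀` for some `g ∈ G`; in particular every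
maximal elementary abelian `p`-subgroup of `G` has order `p`. -/
theorem statement15 (p : ℕ) (hp : p.Prime) (G : Type*) [Group G] [Finite G]
    (E₀ : Subgroup G) (hE₀ : Maximal (IsElementaryAbelian p) E₀)
    (hcard : Nat.card E₀ = p) :
    ∀ E : Subgroup G, Maximal (IsElementaryAbelian p) E →
      (∃ g : G, Subgroup.map (MulAut.conj g).toMonoidHom E = E₀) ∧ Nat.card E = p := by
  intro E hE
  haveI : Fact p.Prime := ⟨hp⟩
  -- E₀ is a p-group; put it inside a Sylow p-subgroup P
  have hE₀p : IsPGroup p E₀ := IsPGroup.of_card (by rw [hcard, pow_one])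
  obtain ⟨P, hP⟩ := hE₀p.exists_le_sylow
  -- P is nontrivial
  haveI : Nontrivial E₀ := Finite.one_lt_card_iff_nontrivial.1 (by rw [hcard]; exact hp.one_lt)
  obtain ⟨x₀, hx₀⟩ := exists_ne (1 : E₀)
  haveI : Nontrivial (P : Subgroup G) := by
    refine ⟨⟨⟨(x₀ : G), hP x₀.2⟩, 1, ?_⟩⟩
    simp only [ne_eq, Subtype.ext_iff]
    exact fun h => hx₀ (Subtype.ext h)
  -- find z of order p in the center of P
  have hPp : IsPGroup p (P : Subgroup G) := P.2
  haveI : Nontrivial (Subgroup.center (P : Subgroup G)) := hPp.center_nontrivial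
  have hZp : IsPGroup p (Subgroup.center (P : Subgroup G)) := hPp.to_subgroup _
  obtain ⟨n, hn, hcardZ⟩ := hZp.nontrivial_iff_card.1 inferInstance
  have hdvd : p ∣ Nat.card (Subgroup.center (P : Subgroup G)) := by
    rw [hcardZ]; exact dvd_pow_self p hn.ne'
  obtain ⟨c, hc⟩ := exists_prime_orderOf_dvd_card' p hdvd
  set z : G := ((c : (P : Subgroup G)) : G) with hzdef
  have hzP : z ∈ (P : Subgroup G) := (c : (P : Subgroup G)).2
  have hzp : z ^ p = 1 := by
    have h1 : c ^ p = 1 := orderOf_dvd_iff_pow_eq_one.mp (by rw [hc])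
    have h2 := congrArg (fun t : (Subgroup.center (P : Subgroup G)) => ((t : (P : Subgroup G)) : G)) h1
    simpa using h2
  have hz1 : z ≠ 1 := by
    intro h
    have hc1 : c = 1 := by
      apply Subtype.ext; apply Subtype.ext; exact h
    rw [hc1, orderOf_one] at hc
    exact hp.one_lt.ne' hc.symm
  have hzcent : ∀ y ∈ (P : Subgroup G), z * y = y * z := by
    intro y hy
    have h1 := (Subgroup.mem_center_iff.1 c.2) ⟨y, hy⟩
    have h2 := congrArg (fun t : (P : Subgroup G) => (t : G)) h1
    simpa using h2.symm
  -- the cyclic subgroup generated by z is elementary abelian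
  have hZel : IsElementaryAbelian p (Subgroup.zpowers z) := by
    constructor
    · rintro a ⟨m, rfl⟩ b ⟨k, rfl⟩
      exact ((Commute.refl z).zpow_zpow m k)
    · rintro a ⟨m, rfl⟩
      rw [← zpow_natCast, ← zpow_mul, mul_comm, zpow_mul, zpow_natCast, hzp, one_zpow]
  -- E₀ ⊔ ⟨z⟩ is elementary abelian, hence z ∈ E₀ and E₀ = ⟨z⟩
  have hcross : ∀ a ∈ E₀, ∀ b ∈ Subgroup.zpowers z, a * b = b * a := by
    rintro a ha b ⟨k, rfl⟩
    have hcz : Commute z a := hzcent a (hP ha)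
    exact ((hcz.zpow_left k).symm).eq
  have hsup := hE₀.1.sup hZel hcross
  have hle : E₀ ⊔ Subgroup.zpowers z ≤ E₀ := hE₀.2 hsup le_sup_left
  have hZle : Subgroup.zpowers z ≤ E₀ := le_sup_right.trans hle
  have horder : orderOf z = p := orderOf_eq_prime hzp hz1
  have hE₀eq : Subgroup.zpowers z = E₀ := by
    apply Subgroup.eq_of_le_of_card_ge hZle
    rw [hcard, Nat.card_zpowers, horder]
  -- E₀ is central in P
  have hcentral : ∀ a ∈ E₀, ∀ y ∈ (P : Subgroup G), a * y = y * a := by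
    intro a ha y hy
    rw [← hE₀eq] at ha
    obtain ⟨k, rfl⟩ := ha
    have hcz : Commute z y := hzcent y hy
    show z ^ k * y = y * z ^ k
    exact (hcz.zpow_left k).eq
  -- E is a p-group; put it in a Sylow subgroup and conjugate to P
  have hEp : IsPGroup p E := by
    intro x
    refine ⟨1, ?_⟩
    rw [pow_one]
    exact Subtype.ext (by simpa using hE.1.2 x x.2)
  obtain ⟨Q, hQ⟩ := hEp.exists_le_sylow
  obtain ⟨g, hg⟩ := MulAction.exists_smul_eq G Q P
  set F : Subgroup G := E.map (MulAut.conj g).toMonoidHom with hFdef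
  have hFP : F ≤ (P : Subgroup G) := by
    have h1 : F ≤ (Q : Subgroup G).map (MulAut.conj g).toMonoidHom :=
      Subgroup.map_mono hQ
    have h2 : (Q : Subgroup G).map (MulAut.conj g).toMonoidHom = ((g • Q : Sylow p G) : Subgroup G) := by
      rw [Sylow.coe_subgroup_smul]
      rfl
    rw [h2, hg] at h1
    exact h1
  have hF : Maximal (IsElementaryAbelian p) F := hE.conjMap g
  -- E₀ ⊔ F is elementary abelian, so F = E₀
  have hcross2 : ∀ a ∈ E₀, ∀ b ∈ F, a * b = b * a := fun a ha b hb =>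
    hcentral a ha b (hFP hb)
  have hsup2 := hE₀.1.sup hF.1 hcross2
  have hFE₀ : F = E₀ := by
    apply le_antisymm
    · exact le_sup_right.trans (hE₀.2 hsup2 le_sup_left)
    · exact le_sup_left.trans (hF.2 hsup2 le_sup_right)
  have hcardE : Nat.card E = p := by
    have hinj : Function.Injective (MulAut.conj g).toMonoidHom := (MulAut.conj g).injective
    have := Nat.card_congr (Subgroup.equivMapOfInjective E _ hinj).toEquiv
    rw [this, ← hFdef, hFE₀, hcard]
  exact ⟨⟨g, hFE₀⟩, hcardE⟩
end

section
/- Let Γ = (Γ₀, Γ₁) be a locally finite quiver without loops or multiple arrows, and let G be an admissible group of quiver automorphisms of Γ. Then the canonical projection onto the orbit quiver Γ/G is a covering: for every vertex x ∈ Γ₀, the map y ↦ [y] restricts to a bijection from x⁺ onto [x]⁺ and to a bijection from x⁻ onto [x]⁻. -/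
/-- Let `Γ` be a locally finite quiver without loops or multiple arrows (given by the
arrow relation `Arrow` on the vertex set `V`), and let `G` be a group acting on `V` by
quiver automorphisms which is admissible.  Then the canonical projection onto the orbit
quiver `Γ/G` is a covering: for every vertex `x`, the map `y ↦ [y]` restricts to a
bijection from `x⁺` onto `[x]⁺` and to a bijection from `x⁻` onto `[x]⁻`.  (An arrow
`[a] → [b]` of the orbit quiver is the existence of representatives `a' ∈ [a]`,
`b' ∈ [b]` with an arrow `a' → b'` in `Γ`.) -/
theorem statement16 {V G : Type*} [Group G] [MulAction G V]
    (Arrow : V → V → Prop)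
    (hnoloops : ∀ x : V, ¬ Arrow x x)
    (hlocfin : ∀ x : V, {y | Arrow x y ∨ Arrow y x}.Finite)
    (hGaut : ∀ (g : G) (x y : V), Arrow (g • x) (g • y) ↔ Arrow x y)
    (hadm : ∀ x y : V,
      (MulAction.orbit G x ∩ ({y} ∪ {z | Arrow y z})).Subsingleton ∧
      (MulAction.orbit G x ∩ ({y} ∪ {z | Arrow z y})).Subsingleton)
    (x : V) :
    Set.BijOn (Quotient.mk (MulAction.orbitRel G V)) {y | Arrow x y}
      {c : Quotient (MulAction.orbitRel G V) | ∃ a b : V, Arrow a b ∧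
        Quotient.mk (MulAction.orbitRel G V) a = Quotient.mk (MulAction.orbitRel G V) x ∧
        Quotient.mk (MulAction.orbitRel G V) b = c} ∧
    Set.BijOn (Quotient.mk (MulAction.orbitRel G V)) {y | Arrow y x}
      {c : Quotient (MulAction.orbitRel G V) | ∃ a b : V, Arrow a b ∧
        Quotient.mk (MulAction.orbitRel G V) b = Quotient.mk (MulAction.orbitRel G V) x ∧
        Quotient.mk (MulAction.orbitRel G V) a = c} := by

  have hq : ∀ a b : V, Quotient.mk (MulAction.orbitRel G V) a =
      Quotient.mk (MulAction.orbitRel G V) b ↔ ∃ g : G, g • b = a := by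
    intro a b
    rw [Quotient.eq]
    exact MulAction.orbitRel_apply
  constructor
  · refine ⟨?_, ?_, ?_⟩
    · intro y hy
      exact ⟨x, y, hy, rfl, rfl⟩
    · intro y hy y' hy' h
      obtain ⟨g, hg⟩ := (hq y y').mp h
      exact (hadm y' x).1 ⟨⟨g, hg⟩, Or.inr hy⟩ ⟨⟨1, one_smul _ _⟩, Or.inr hy'⟩
    · rintro c ⟨a, b, hab, ha, hb⟩
      obtain ⟨g, hg⟩ := (hq a x).mp ha
      refine ⟨g⁻¹ • b, ?_, ?_⟩
      · show Arrow x (g⁻¹ • b)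
        rw [← hGaut g, smul_inv_smul, hg]
        exact hab
      · rw [← hb]
        exact (hq _ b).mpr ⟨g⁻¹, rfl⟩
  · refine ⟨?_, ?_, ?_⟩
    · intro y hy
      exact ⟨y, x, hy, rfl, rfl⟩
    · intro y hy y' hy' h
      obtain ⟨g, hg⟩ := (hq y y').mp h
      exact (hadm y' x).2 ⟨⟨g, hg⟩, Or.inr hy⟩ ⟨⟨1, one_smul _ _⟩, Or.inr hy'⟩
    · rintro c ⟨a, b, hab, hb, ha⟩
      obtain ⟨g, hg⟩ := (hq b x).mp hb
      refine ⟨g⁻¹ • a, ?_, ?_⟩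
      · show Arrow (g⁻¹ • a) x
        rw [← hGaut g, smul_inv_smul, hg]
        exact hab
      · rw [← ha]
        exact (hq _ a).mpr ⟨g⁻¹, rfl⟩
end
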